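/- Let n = 2^k, N = n², and let d < n. Let r, ℓ, m be positive integers with n − r > d, r < d − 1, m ≥ n − d − r, m ≤ N, and suppose n^r · C(N−(n−d−r), m−(n−d−r)) ≤ C(N, m). Then Dim(⟨∂^r NW_d⟩_{(ℓ,m)}) ≥ (1/2)·n^r·C(N, m)·C(ℓ−1, m−1), where C(a,b) denotes the binomial coefficient. -/

import Mathlib

open MvPolynomial

/-- Iterated partial derivative along a list of variables. -/
noncomputable def derivList {σ F : Type*} [CommSemiring F]
    (L : List σ) (P : MvPolynomial σ F) : MvPolynomial σ F :=
  L.foldr (fun x Q => MvPolynomial.pderiv x Q) P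

/-- The partial derivative `∂_γ P` with respect to the monomial with exponent vector `γ`
(first-order partial derivatives iterated according to the exponent vector). -/
noncomputable def derivMon {σ F : Type*} [CommSemiring F]
    (γ : σ →₀ ℕ) (P : MvPolynomial σ F) : MvPolynomial σ F :=
  derivList (Finsupp.toMultiset γ).toList P

/-- The degree of a monomial given by its exponent vector. -/
def monDeg {σ : Type*} (e : σ →₀ ℕ) : ℕ := e.sum fun _ c => c

/-- The space `⟨∂^r P⟩_{(ℓ,m)}` of support-`m` degree-`ℓ` shifted partial derivatives of
order `r` of `P`. -/
noncomputable def shiftedSpan {σ F : Type*} [CommSemiring F]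
    (r ℓ m : ℕ) (P : MvPolynomial σ F) : Submodule F (MvPolynomial σ F) :=
  Submodule.span F { Q | ∃ e γ : σ →₀ ℕ, monDeg e = ℓ ∧ e.support.card = m ∧
    monDeg γ = r ∧ Q = MvPolynomial.monomial e (1 : F) * derivMon γ P }

/-- The Nisan–Wigderson polynomial `NW_d`. -/
noncomputable def NW (F : Type*) [Field F] [Fintype F] (d : ℕ) :
    MvPolynomial (F × F) F :=
  ∑ a : Fin d → F, ∏ i : F, MvPolynomial.X (i, ∑ j : Fin d, a j * i ^ (j : ℕ))

/-! ### Auxiliary counting lemmas -/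

open Finset

lemma monDeg_eq_card {σ : Type*} (e : σ →₀ ℕ) :
    monDeg e = Multiset.card (Finsupp.toMultiset e) := by
  rw [Finsupp.card_toMultiset]; rfl

/-- Stars and bars over `Fin m`. -/
lemma card_finsuppAntidiag_fin (m t : ℕ) :
    (Finset.finsuppAntidiag (Finset.univ : Finset (Fin m)) t).card = (m + t - 1).choose t := by
  classical
  have : Fintype.card {f : Fin m →₀ ℕ // f ∈ Finset.finsuppAntidiag (Finset.univ : Finset (Fin m)) t}
      = Fintype.card (Sym (Fin m) t) := by
    apply Fintype.card_congr
    refine ⟨fun f => ⟨Finsupp.toMultiset f.1, ?_⟩, fun s => ⟨Multiset.toFinsupp s.1, ?_⟩, ?_, ?_⟩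
    · have := (Finset.mem_finsuppAntidiag'.1 f.2).1
      rw [← monDeg_eq_card, monDeg, this]
    · rw [Finset.mem_finsuppAntidiag']
      refine ⟨?_, Finset.subset_univ _⟩
      rw [show ((Multiset.toFinsupp s.1).sum fun _ x => x) = monDeg (Multiset.toFinsupp s.1) from rfl,
        monDeg_eq_card, Multiset.toFinsupp_toMultiset]
      exact s.2
    · intro f; ext1; simp
    · intro s; ext1; simp
  rw [← Fintype.card_coe, this, Sym.card_sym_eq_choose, Fintype.card_fin]

lemma card_finsuppAntidiag {σ : Type*} [DecidableEq σ] (s : Finset σ) (t : ℕ) :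
    (Finset.finsuppAntidiag s t).card = (s.card + t - 1).choose t := by
  classical
  rw [← card_finsuppAntidiag_fin s.card t]
  symm
  set emb := s.equivFin.symm.toEmbedding.trans (Function.Embedding.subtype fun x => x ∈ s) with hemb
  apply Finset.card_bij (fun f _ => Finsupp.embDomain emb f)
  · intro f hf
    rw [Finset.mem_finsuppAntidiag'] at hf ⊢
    constructor
    · rw [Finsupp.sum_embDomain]; exact hf.1
    · intro x hx
      rw [Finsupp.support_embDomain, Finset.mem_map] at hx
      obtain ⟨i, _, rfl⟩ := hx
      exact (s.equivFin.symm i).2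
  · intro f _ g _ h
    exact Finsupp.embDomain_injective _ h
  · intro g hg
    rw [Finset.mem_finsuppAntidiag'] at hg
    have hrange : ↑g.support ⊆ Set.range emb := by
      intro x hx
      have hxs : x ∈ s := hg.2 hx
      exact ⟨s.equivFin ⟨x, hxs⟩, by simp [hemb]⟩
    have h1 : Finsupp.embDomain emb (Finsupp.comapDomain emb g emb.injective.injOn) = g :=
      Finsupp.embDomain_comapDomain hrange
    refine ⟨Finsupp.comapDomain emb g emb.injective.injOn, ?_, h1⟩
    rw [Finset.mem_finsuppAntidiag']
    refine ⟨?_, Finset.subset_univ _⟩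
    have := Finsupp.sum_embDomain (v := Finsupp.comapDomain emb g emb.injective.injOn)
      (f := emb) (g := fun _ (x : ℕ) => x)
    rw [h1] at this
    rw [← this, hg.1]

/-- number of `e` with support exactly `s` and degree `ℓ`. -/
lemma card_fixed_support {σ : Type*} [DecidableEq σ] [Fintype σ] (s : Finset σ) (ℓ : ℕ)
    (hℓ : 0 < ℓ) (hs : 0 < s.card) :
    ((Finset.finsuppAntidiag (univ : Finset σ) ℓ).filter (fun e => e.support = s)).card
      = (ℓ - 1).choose (s.card - 1) := by
  classical
  set m := s.card with hm
  rcases lt_or_ge ℓ m with hlt | hge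
  · rw [Finset.filter_eq_empty_iff.2, Finset.card_empty, eq_comm, Nat.choose_eq_zero_iff]
    · omega
    · intro e he
      rw [Finset.mem_finsuppAntidiag'] at he
      intro hsupp
      have h1 : e.support.card ≤ e.sum fun _ c => c := by
        rw [Finsupp.sum]
        calc e.support.card = ∑ _x ∈ e.support, 1 := by simp
        _ ≤ _ := Finset.sum_le_sum (fun x hx => Finsupp.mem_support_iff.1 hx |>.bot_lt)
      rw [hsupp] at h1
      omega
  · set os : σ →₀ ℕ := Multiset.toFinsupp (s.val) with hos
    have hos_apply : ∀ a, os a = if a ∈ s then 1 else 0 := by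
      intro a
      rw [hos, Multiset.toFinsupp_apply]
      by_cases h : a ∈ s
      · simp [h, Multiset.count_eq_one_of_mem s.nodup (by simpa using h)]
      · simp [h, Multiset.count_eq_zero_of_notMem (s := s.val) h]
    have hos_deg : (os.sum fun _ c => c) = m := by
      rw [show (os.sum fun _ c => c) = monDeg os from rfl, monDeg_eq_card, hos,
        Multiset.toFinsupp_toMultiset]
      rfl
    have key : ∀ e : σ →₀ ℕ, e.support = s → os ≤ e := by
      intro e he
      intro a
      rw [hos_apply]
      by_cases h : a ∈ s
      · simp only [h, if_true]
        have : a ∈ e.support := he ▸ h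
        exact Nat.one_le_iff_ne_zero.2 (Finsupp.mem_support_iff.1 this)
      · simp [h]
    rw [show (ℓ - 1).choose (m-1) = (Finset.finsuppAntidiag s (ℓ - m)).card by
      rw [card_finsuppAntidiag]
      have h1 : m + (ℓ - m) - 1 = ℓ - 1 := by omega
      rw [← hm, h1, ← Nat.choose_symm (by omega : m - 1 ≤ ℓ - 1)]
      congr 1; omega]
    apply Finset.card_bij' (fun e _ => e - os) (fun f _ => f + os)
    · intro e he
      rw [Finset.mem_filter, Finset.mem_finsuppAntidiag'] at he
      obtain ⟨⟨hsum, -⟩, hsupp⟩ := he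
      rw [Finset.mem_finsuppAntidiag']
      constructor
      · have hle := key e hsupp
        have heq2 : (e - os) + os = e := tsub_add_cancel_of_le hle
        have hdeg : ((e - os).sum fun _ c => c) + (os.sum fun _ c => c)
            = e.sum fun _ c => c := by
          conv_rhs => rw [← heq2]
          show monDeg (e - os) + monDeg os = monDeg (e - os + os)
          simp only [monDeg_eq_card, map_add, Multiset.card_add]
        omega
      · intro x hx
        have hxx : (e - os) x ≠ 0 := Finsupp.mem_support_iff.1 hx
        rw [Finsupp.tsub_apply] at hxx
        have : e x ≠ 0 := by omega
        exact hsupp ▸ Finsupp.mem_support_iff.2 this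
    · intro f hf
      rw [Finset.mem_finsuppAntidiag'] at hf
      obtain ⟨hsum, hsupp⟩ := hf
      rw [Finset.mem_filter, Finset.mem_finsuppAntidiag']
      have hsupp2 : (f + os).support = s := by
        ext a
        rw [Finsupp.mem_support_iff, Finsupp.add_apply, hos_apply]
        by_cases h : a ∈ s
        · simp [h]
        · have hfa : f a = 0 := by
            by_contra hfa
            exact h (hsupp (Finsupp.mem_support_iff.2 hfa))
          simp [h, hfa]
      refine ⟨⟨?_, Finset.subset_univ _⟩, hsupp2⟩
      have : ((f + os).sum fun _ c => c) = (f.sum fun _ c => c) + (os.sum fun _ c => c) := by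
        show monDeg (f + os) = monDeg f + monDeg os
        simp only [monDeg_eq_card, map_add, Multiset.card_add]
      omega
    · intro e he
      rw [Finset.mem_filter] at he
      exact tsub_add_cancel_of_le (key e he.2)
    · intro f _
      exact add_tsub_cancel_right f os

section E
variable {σ : Type*} [DecidableEq σ] [Fintype σ] (ℓ m : ℕ)

/-- the finset of monomials of degree ℓ and support size m -/
noncomputable def Emons : Finset (σ →₀ ℕ) :=
  (Finset.finsuppAntidiag (univ : Finset σ) ℓ).filter (fun e => e.support.card = m)

lemma card_Emons (hℓ : 0 < ℓ) (hm : 0 < m) :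
    (Emons (σ := σ) ℓ m).card = (Fintype.card σ).choose m * (ℓ - 1).choose (m - 1) := by
  classical
  rw [Finset.card_eq_sum_card_fiberwise
    (f := fun e => e.support) (t := (univ : Finset σ).powersetCard m)
    (by intro e he
        rw [Finset.mem_coe, Emons, Finset.mem_filter] at he
        rw [Finset.mem_coe, Finset.mem_powersetCard]
        exact ⟨Finset.subset_univ _, he.2⟩)]
  have : ∀ s ∈ (univ : Finset σ).powersetCard m,
      ((Emons (σ := σ) ℓ m).filter (fun e => e.support = s)).card
        = (ℓ - 1).choose (m - 1) := by
    intro s hs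
    rw [Finset.mem_powersetCard] at hs
    have : (Emons (σ := σ) ℓ m).filter (fun e => e.support = s)
        = (Finset.finsuppAntidiag (univ : Finset σ) ℓ).filter (fun e => e.support = s) := by
      ext e
      simp only [Emons, Finset.mem_filter, and_assoc]
      constructor
      · rintro ⟨h1, h2, h3⟩; exact ⟨h1, h3⟩
      · rintro ⟨h1, h3⟩; exact ⟨h1, by rw [h3, hs.2], h3⟩
    rw [this, card_fixed_support s ℓ hℓ (by omega : 0 < s.card), hs.2]
  rw [Finset.sum_congr rfl this, Finset.sum_const, Finset.card_powersetCard, Finset.card_univ,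
    smul_eq_mul]

lemma card_Emons_filter (hℓ : 0 < ℓ) (hm : 0 < m) (S : Finset σ) :
    ((Emons (σ := σ) ℓ m).filter (fun e => S ⊆ e.support)).card
      ≤ (Fintype.card σ - S.card).choose (m - S.card) * (ℓ - 1).choose (m - 1) := by
  classical
  set T := ((univ : Finset σ).powersetCard m).filter (fun s => S ⊆ s) with hT
  rw [Finset.card_eq_sum_card_fiberwise
    (f := fun e => e.support) (t := T)
    (by intro e he
        rw [Finset.mem_coe, Finset.mem_filter, Emons, Finset.mem_filter] at he
        rw [Finset.mem_coe, hT, Finset.mem_filter, Finset.mem_powersetCard]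
        exact ⟨⟨Finset.subset_univ _, he.1.2⟩, he.2⟩)]
  have hTcard : T.card ≤ (Fintype.card σ - S.card).choose (m - S.card) := by
    have : T.card ≤ ((univ \ S).powersetCard (m - S.card)).card := by
      apply Finset.card_le_card_of_injOn (fun s => s \ S)
      · intro s hs
        rw [hT, Finset.mem_coe, Finset.mem_filter, Finset.mem_powersetCard] at hs
        rw [Finset.mem_coe, Finset.mem_powersetCard]
        refine ⟨Finset.sdiff_subset_sdiff hs.1.1 (le_refl S), ?_⟩
        rw [Finset.card_sdiff_of_subset hs.2, hs.1.2]
      · intro s hs t ht hst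
        rw [Finset.mem_coe, hT, Finset.mem_filter] at hs ht
        have := congrArg (· ∪ S) hst
        simpa [Finset.sdiff_union_of_subset hs.2, Finset.sdiff_union_of_subset ht.2] using this
    rw [Finset.card_powersetCard, Finset.card_sdiff_of_subset (Finset.subset_univ S),
      Finset.card_univ] at this
    exact this
  calc ∑ s ∈ T, (((Emons (σ := σ) ℓ m).filter (fun e => S ⊆ e.support)).filter
        (fun e => e.support = s)).card
      ≤ ∑ s ∈ T, (ℓ - 1).choose (m - 1) := by
        apply Finset.sum_le_sum
        intro s hs
        rw [hT, Finset.mem_filter, Finset.mem_powersetCard] at hs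
        calc _ ≤ (((Finset.finsuppAntidiag (univ : Finset σ) ℓ).filter
              (fun e => e.support = s))).card := by
              apply Finset.card_le_card
              intro e he
              simp only [Finset.mem_filter, Emons] at he ⊢
              exact ⟨he.1.1.1, he.2⟩
        _ = _ := by
              rw [card_fixed_support s ℓ hℓ (by omega : 0 < s.card), hs.1.2]
    _ = T.card * (ℓ - 1).choose (m - 1) := by rw [Finset.sum_const, smul_eq_mul]
    _ ≤ _ := Nat.mul_le_mul_right _ hTcard
end E

/-- Bonferroni-type inequality. -/
lemma sum_card_le_card_biUnion {β Ω : Type*} [DecidableEq Ω] [LinearOrder β] [DecidableEq β]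
    (s : Finset β) (Tf : β → Finset Ω) :
    ∑ b ∈ s, (Tf b).card ≤ (s.biUnion Tf).card
      + ∑ p ∈ s.offDiag.filter (fun p => p.2 < p.1), (Tf p.1 ∩ Tf p.2).card := by
  induction s using Finset.induction_on_max with
  | empty => simp
  | insert a s ha ih =>
    have has : a ∉ s := fun h => lt_irrefl a (ha a h)
    rw [Finset.sum_insert has, Finset.biUnion_insert]
    have hpairs : (insert a s).offDiag.filter (fun p => p.2 < p.1)
        = s.offDiag.filter (fun p => p.2 < p.1) ∪ s.image (fun b => (a, b)) := by
      ext ⟨p1, p2⟩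
      simp only [Finset.mem_filter, Finset.mem_offDiag, Finset.mem_insert, Finset.mem_union,
        Finset.mem_image]
      constructor
      · rintro ⟨⟨h1 | h1, h2 | h2, h3⟩, h4⟩
        · exact absurd (h1.trans h2.symm) h3
        · exact Or.inr ⟨p2, h2, by rw [h1]⟩
        · exact absurd h4 (not_lt.2 (h2 ▸ (ha p1 h1).le))
        · exact Or.inl ⟨⟨h1, h2, h3⟩, h4⟩
      · rintro (⟨⟨h1, h2, h3⟩, h4⟩ | ⟨b, hb, heq⟩)
        · exact ⟨⟨Or.inr h1, Or.inr h2, h3⟩, h4⟩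
        · injection heq with e1 e2
          subst e1; subst e2
          exact ⟨⟨Or.inl rfl, Or.inr hb, (ha _ hb).ne'⟩, ha _ hb⟩
    rw [hpairs, Finset.sum_union (by
      rw [Finset.disjoint_left]
      rintro ⟨p1, p2⟩ hp hq
      rw [Finset.mem_filter, Finset.mem_offDiag] at hp
      rw [Finset.mem_image] at hq
      obtain ⟨b, hb, heq⟩ := hq
      cases heq
      exact has hp.1.1), Finset.sum_image (by
        intro x _ y _ h
        exact (Prod.ext_iff.1 h).2)]
    have hcard : (Tf a ∪ s.biUnion Tf).card + (Tf a ∩ s.biUnion Tf).card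
        = (Tf a).card + (s.biUnion Tf).card := Finset.card_union_add_card_inter _ _
    have hint : (Tf a ∩ s.biUnion Tf).card ≤ ∑ b ∈ s, (Tf a ∩ Tf b).card := by
      have : Tf a ∩ s.biUnion Tf = s.biUnion (fun b => Tf a ∩ Tf b) := by
        ext x
        simp only [Finset.mem_inter, Finset.mem_biUnion]
        tauto
      rw [this]
      exact Finset.card_biUnion_le
    have hg : ∑ x ∈ s, ((Tf (a, x).1 ∩ Tf (a, x).2).card) = ∑ x ∈ s, (Tf a ∩ Tf x).card := rfl
    omega

/-! ### Linear independence from distinct leading monomials -/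

section LI
variable {σ K M : Type*} [Field K] [LinearOrder M]

lemma linearIndependent_of_lead {ι : Type*} (ord : (σ →₀ ℕ) → M) (hord : Function.Injective ord)
    (p : ι → MvPolynomial σ K) (lead : ι → (σ →₀ ℕ)) (hinj : Function.Injective lead)
    (hne : ∀ i, MvPolynomial.coeff (lead i) (p i) ≠ 0)
    (hmax : ∀ i γ, MvPolynomial.coeff γ (p i) ≠ 0 → ord γ ≤ ord (lead i)) :
    LinearIndependent K p := by
  rw [linearIndependent_iff]
  intro l hl
  by_contra hlne
  have hsupp : l.support.Nonempty := Finsupp.support_nonempty_iff.mpr hlne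
  obtain ⟨i0, hi0, hmaxi⟩ := l.support.exists_max_image (fun i => ord (lead i)) hsupp
  have hc := congrArg (MvPolynomial.coeff (lead i0)) hl
  rw [Finsupp.linearCombination_apply, Finsupp.sum, MvPolynomial.coeff_sum] at hc
  simp only [MvPolynomial.coeff_smul, MvPolynomial.coeff_zero, smul_eq_mul] at hc
  rw [Finset.sum_eq_single i0 (fun j hj hne' => ?_) (fun h => absurd hi0 h)] at hc
  · rcases mul_eq_zero.1 hc with h | h
    · exact Finsupp.mem_support_iff.1 hi0 h
    · exact hne i0 h
  · rcases eq_or_ne (MvPolynomial.coeff (lead i0) (p j)) 0 with h | h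
    · rw [h, mul_zero]
    · exfalso
      have h1 := hmax j _ h
      have h2 := hmaxi j hj
      have : lead j = lead i0 := hord (le_antisymm h2 h1)
      exact hne' (hinj this)

lemma card_le_finrank_of_lead (W : Submodule K (MvPolynomial σ K)) [FiniteDimensional K W]
    (T : Finset (σ →₀ ℕ)) (ord : (σ →₀ ℕ) → M) (hord : Function.Injective ord)
    (h : ∀ w ∈ T, ∃ P ∈ W, MvPolynomial.coeff w P ≠ 0 ∧
      ∀ γ, MvPolynomial.coeff γ P ≠ 0 → ord γ ≤ ord w) :
    T.card ≤ Module.finrank K W := by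
  classical
  choose P hPW hPne hPmax using h
  set q : {w // w ∈ T} → W := fun w => ⟨P w.1 w.2, hPW w.1 w.2⟩ with hq
  have hli : LinearIndependent K q := by
    have : LinearIndependent K (fun w : {w // w ∈ T} => P w.1 w.2) := by
      apply linearIndependent_of_lead ord hord _ (fun w : {w // w ∈ T} => w.1)
        (fun a b hab => Subtype.ext hab)
      · exact fun w => hPne w.1 w.2
      · exact fun w => hPmax w.1 w.2
    exact (LinearIndependent.of_comp W.subtype (by exact this))
  have := hli.fintype_card_le_finrank
  rwa [Fintype.card_coe] at this

lemma finiteDimensional_shiftedSpan {σ' : Type*} [Fintype σ'] [DecidableEq σ']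
    (r ℓ m : ℕ) (P : MvPolynomial σ' K) :
    FiniteDimensional K (shiftedSpan r ℓ m P) := by
  classical
  apply FiniteDimensional.span_of_finite
  apply Set.Finite.subset (Finset.finite_toSet
    ((Finset.finsuppAntidiag (Finset.univ : Finset σ') ℓ ×ˢ
      Finset.finsuppAntidiag (Finset.univ : Finset σ') r).image
      (fun p => MvPolynomial.monomial p.1 (1:K) * derivMon p.2 P)))
  rintro Q ⟨e, γ, he, -, hγ, rfl⟩
  simp only [Finset.coe_image, Set.mem_image, Finset.mem_coe, Finset.mem_product]
  refine ⟨(e, γ), ⟨?_, ?_⟩, rfl⟩ <;>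
    rw [Finset.mem_finsuppAntidiag'] <;>
    exact ⟨by assumption, Finset.subset_univ _⟩
end LI

/-! ### Derivatives of multilinear monomials -/

section Deriv
variable {σ K : Type*} [CommSemiring K] [DecidableEq σ]

lemma derivList_cons (x : σ) (L : List σ) (P : MvPolynomial σ K) :
    derivList (x :: L) P = pderiv x (derivList L P) := rfl

lemma derivList_sum {α : Type*} (L : List σ) (s : Finset α) (f : α → MvPolynomial σ K) :
    derivList L (∑ a ∈ s, f a) = ∑ a ∈ s, derivList L (f a) := by
  induction L with
  | nil => rfl
  | cons x L ih => rw [derivList_cons, ih, map_sum]; rfl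

lemma derivMon_sum {α : Type*} (γ : σ →₀ ℕ) (s : Finset α) (f : α → MvPolynomial σ K) :
    derivMon γ (∑ a ∈ s, f a) = ∑ a ∈ s, derivMon γ (f a) :=
  derivList_sum _ _ _

lemma toFinsupp_cons (x : σ) (L : List σ) :
    Multiset.toFinsupp ((x :: L : List σ) : Multiset σ)
      = Finsupp.single x 1 + Multiset.toFinsupp (L : Multiset σ) := by
  ext a
  simp only [Multiset.toFinsupp_apply, Finsupp.add_apply, Finsupp.single_apply]
  rw [← Multiset.cons_coe, Multiset.count_cons]
  split <;> split <;> simp_all [eq_comm] <;> omega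

lemma derivList_sq_free (L : List σ) (hL : L.Nodup) (u : σ →₀ ℕ) (hu : ∀ x, u x ≤ 1) :
    derivList L (monomial u (1:K)) =
      if ∀ x ∈ L, u x = 1 then monomial (u - Multiset.toFinsupp (L : Multiset σ)) 1 else 0 := by
  induction L with
  | nil =>
    simp only [List.not_mem_nil, false_implies, implies_true, if_true]
    show monomial u (1:K) = _
    congr 1
    ext a
    simp
  | cons x L ih =>
    rw [List.nodup_cons] at hL
    rw [derivList_cons, ih hL.2]
    by_cases hall : ∀ y ∈ L, u y = 1
    · rw [if_pos hall]
      rw [pderiv_monomial]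
      have hx : (u - Multiset.toFinsupp (L : Multiset σ)) x = u x := by
        rw [Finsupp.tsub_apply, Multiset.toFinsupp_apply]
        have : Multiset.count x (L : Multiset σ) = 0 := by
          rw [Multiset.count_eq_zero]
          simpa using hL.1
        omega
      by_cases hux : u x = 1
      · rw [if_pos (by intro y hy; rcases List.mem_cons.1 hy with rfl | hy; exact hux; exact hall y hy)]
        rw [hx, hux]
        congr 1
        · rw [toFinsupp_cons, tsub_tsub, add_comm]
        · norm_num
      · rw [if_neg (by intro hcontra; exact hux (hcontra x List.mem_cons_self))]
        have : u x = 0 := by have := hu x; omega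
        rw [hx, this]
        simp
    · rw [if_neg hall, if_neg (by intro hcontra; exact hall (fun y hy => hcontra y (List.mem_cons_of_mem x hy)))]
      simp

lemma derivMon_sq_free (γ u : σ →₀ ℕ) (hγ : ∀ x, γ x ≤ 1) (hu : ∀ x, u x ≤ 1) :
    derivMon γ (monomial u (1:K)) = if γ ≤ u then monomial (u - γ) 1 else 0 := by
  rw [derivMon]
  have hnodup : (Finsupp.toMultiset γ).toList.Nodup := by
    have : ((Finsupp.toMultiset γ).toList : Multiset σ).Nodup := by
      rw [Multiset.coe_toList]
      rw [Multiset.nodup_iff_count_le_one]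
      intro a
      rw [Finsupp.count_toMultiset]
      exact hγ a
    exact this
  rw [derivList_sq_free _ hnodup u hu]
  have hcoe : ((Finsupp.toMultiset γ).toList : Multiset σ) = Finsupp.toMultiset γ :=
    Multiset.coe_toList _
  have htf : Multiset.toFinsupp ((Finsupp.toMultiset γ).toList : Multiset σ) = γ := by
    rw [hcoe, Finsupp.toMultiset_toFinsupp]
  have hmem : ∀ x, x ∈ (Finsupp.toMultiset γ).toList ↔ γ x ≠ 0 := by
    intro x
    rw [← Multiset.mem_coe, hcoe, Finsupp.mem_toMultiset, Finsupp.mem_support_iff]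
  have hcond : (∀ x ∈ (Finsupp.toMultiset γ).toList, u x = 1) ↔ γ ≤ u := by
    constructor
    · intro h
      intro a
      by_cases ha : γ a = 0
      · simp [ha]
      · have := h a ((hmem a).2 ha)
        have := hγ a
        omega
    · intro h x hx
      have h1 := (hmem x).1 hx
      have h2 := h x
      have h3 := hγ x
      have h4 := hu x
      omega
  rw [htf]
  by_cases h : γ ≤ u
  · rw [if_pos (hcond.2 h), if_pos h]
  · rw [if_neg (fun hc => h (hcond.1 hc)), if_neg h]
end Deriv

/-! ### Structure of the NW polynomial -/

section NWfacts
variable {F : Type*} [Field F] [Fintype F] [DecidableEq F]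

noncomputable def mono (g : F → F) : (F × F) →₀ ℕ := ∑ i : F, Finsupp.single (i, g i) 1

def pf (d : ℕ) (a : Fin d → F) : F → F := fun i => ∑ j, a j * i ^ (j : ℕ)

lemma mono_apply (g : F → F) (x y : F) : mono g (x, y) = if g x = y then 1 else 0 := by
  rw [mono, Finsupp.finset_sum_apply]
  rw [Finset.sum_eq_single_of_mem x (Finset.mem_univ x)
    (by intro i _ hix
        rw [Finsupp.single_apply, if_neg]
        intro hc
        exact hix (congrArg Prod.fst hc))]
  rw [Finsupp.single_apply]
  by_cases h : g x = y
  · rw [if_pos h, if_pos (by rw [h])]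
  · rw [if_neg h, if_neg (fun hc => h (congrArg Prod.snd hc))]

lemma mono_le_one (g : F → F) : ∀ v, mono g v ≤ 1 := by
  rintro ⟨x, y⟩
  rw [mono_apply]
  split <;> omega

lemma mono_inj : Function.Injective (mono (F := F)) := by
  intro g g' h
  funext i
  have h1 := congrArg (fun e => e (i, g i)) h
  simp [mono_apply] at h1
  by_cases hgi : g' i = g i
  · exact hgi.symm
  · exact absurd h1 hgi

noncomputable def gamb (R : Finset F) (b : ↥R → F) : (F × F) →₀ ℕ :=
  ∑ i : ↥R, Finsupp.single ((i : F), b i) 1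

lemma gamb_apply (R : Finset F) (b : ↥R → F) (x y : F) :
    gamb R b (x, y) = if h : x ∈ R then (if b ⟨x, h⟩ = y then 1 else 0) else 0 := by
  rw [gamb, Finsupp.finset_sum_apply]
  by_cases hx : x ∈ R
  · rw [Finset.sum_eq_single_of_mem ⟨x, hx⟩ (Finset.mem_univ _)
      (by rintro ⟨i, hi⟩ _ hix
          rw [Finsupp.single_apply, if_neg]
          intro hc
          exact hix (Subtype.ext (congrArg Prod.fst hc)))]
    rw [dif_pos hx, Finsupp.single_apply]
    by_cases h : b ⟨x, hx⟩ = y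
    · rw [if_pos h, if_pos (by rw [h])]
    · rw [if_neg h, if_neg (fun hc => h (congrArg Prod.snd hc))]
  · rw [dif_neg hx, Finset.sum_eq_zero]
    rintro ⟨i, hi⟩ _
    rw [Finsupp.single_apply, if_neg]
    intro hc
    have hfst : i = x := congrArg Prod.fst hc
    exact hx (hfst ▸ hi)

lemma gamb_le_one (R : Finset F) (b : ↥R → F) : ∀ v, gamb R b v ≤ 1 := by
  rintro ⟨x, y⟩
  rw [gamb_apply]
  split
  · split <;> omega
  · omega

lemma monDeg_gamb (R : Finset F) (b : ↥R → F) : monDeg (gamb R b) = R.card := by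
  rw [monDeg_eq_card, gamb, map_sum]
  simp [Finsupp.toMultiset_single, Finset.card_univ]

lemma gamb_le_mono_iff (R : Finset F) (b : ↥R → F) (g : F → F) :
    gamb R b ≤ mono g ↔ ∀ i : ↥R, g i = b i := by
  constructor
  · intro h i
    have h1 := h ((i : F), b i)
    rw [gamb_apply, mono_apply, dif_pos i.2] at h1
    simp at h1
    by_cases hg : g (i : F) = b i
    · exact hg
    · rw [if_neg hg] at h1; omega
  · intro h
    rintro ⟨x, y⟩
    rw [gamb_apply, mono_apply]
    by_cases hx : x ∈ R
    · rw [dif_pos hx]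
      by_cases hb : b ⟨x, hx⟩ = y
      · rw [if_pos hb, if_pos (by rw [h ⟨x, hx⟩]; exact hb)]
      · rw [if_neg hb]; split <;> omega
    · rw [dif_neg hx]; split <;> omega

lemma sub_gamb_support (R : Finset F) (b : ↥R → F) (g : F → F) (hg : ∀ i : ↥R, g i = b i) :
    (mono g - gamb R b).support = (Finset.univ \ R).image (fun i => (i, g i)) := by
  ext ⟨x, y⟩
  rw [Finsupp.mem_support_iff, Finsupp.tsub_apply, mono_apply, gamb_apply, Finset.mem_image]
  constructor
  · intro hne
    by_cases hx : x ∈ R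
    · exfalso
      rw [dif_pos hx] at hne
      by_cases hgxy : g x = y
      · rw [if_pos hgxy, if_pos (by rw [← hg ⟨x, hx⟩]; exact hgxy)] at hne
        omega
      · rw [if_neg hgxy] at hne; simp at hne
    · refine ⟨x, by simp [hx], ?_⟩
      rw [dif_neg hx] at hne
      by_cases hgxy : g x = y
      · rw [hgxy]
      · rw [if_neg hgxy] at hne; simp at hne
  · rintro ⟨i, hi, heq⟩
    obtain ⟨rfl, rfl⟩ : i = x ∧ g i = y := ⟨congrArg Prod.fst heq, congrArg Prod.snd heq⟩
    rw [Finset.mem_sdiff] at hi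
    rw [dif_neg hi.2, if_pos rfl]
    omega

lemma prod_X_eq_monomial {ι : Type*} [DecidableEq ι] (s : Finset ι) (h : ι → F × F) :
    (∏ i ∈ s, (X (h i) : MvPolynomial (F × F) F))
      = monomial (∑ i ∈ s, Finsupp.single (h i) 1) 1 := by
  induction s using Finset.induction_on with
  | empty => simp
  | insert a s ha ih =>
    rw [Finset.prod_insert ha, Finset.sum_insert ha, ih, X, monomial_mul, one_mul]

lemma NW_eq (d : ℕ) : NW F d = ∑ a : Fin d → F, monomial (mono (pf d a)) (1 : F) := by
  rw [NW]
  apply Finset.sum_congr rfl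
  intro a _
  exact prod_X_eq_monomial Finset.univ (fun i => (i, pf d a i))

noncomputable def polyOf (d : ℕ) (a : Fin d → F) : Polynomial F :=
  ∑ j : Fin d, Polynomial.C (a j) * Polynomial.X ^ (j : ℕ)

lemma polyOf_natDegree_lt (d : ℕ) (hd : 0 < d) (a : Fin d → F) :
    (polyOf d a).natDegree < d := by
  have : (polyOf d a).natDegree ≤ d - 1 := by
    apply Polynomial.natDegree_sum_le_of_forall_le
    intro j _
    apply le_trans (Polynomial.natDegree_C_mul_le _ _)
    rw [Polynomial.natDegree_X_pow]
    omega
  omega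

lemma polyOf_eval (d : ℕ) (a : Fin d → F) (x : F) :
    (polyOf d a).eval x = pf d a x := by
  rw [polyOf, Polynomial.eval_finset_sum]
  apply Finset.sum_congr rfl
  intro j _
  rw [Polynomial.eval_mul, Polynomial.eval_C, Polynomial.eval_pow, Polynomial.eval_X]

lemma polyOf_coeff (d : ℕ) (a : Fin d → F) (j : Fin d) :
    (polyOf d a).coeff (j : ℕ) = a j := by
  rw [polyOf, Polynomial.finset_sum_coeff]
  rw [Finset.sum_eq_single_of_mem j (Finset.mem_univ j)
    (by intro j' _ hj'
        rw [Polynomial.coeff_C_mul, Polynomial.coeff_X_pow, if_neg (by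
          intro hc; exact hj' (Fin.ext hc.symm)), mul_zero])]
  rw [Polynomial.coeff_C_mul, Polynomial.coeff_X_pow, if_pos rfl, mul_one]

lemma pf_inj (d : ℕ) (hd : 0 < d) (hcard : d ≤ Fintype.card F) :
    Function.Injective (pf (F := F) d) := by
  intro a a' h
  have hzero : polyOf d a - polyOf d a' = 0 := by
    apply Polynomial.eq_zero_of_natDegree_lt_card_of_eval_eq_zero _ Function.injective_id
    · intro x
      rw [Polynomial.eval_sub, polyOf_eval, polyOf_eval, h, sub_self]
    · calc ((polyOf d a - polyOf d a').natDegree : ℕ)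
          ≤ max (polyOf d a).natDegree (polyOf d a').natDegree := Polynomial.natDegree_sub_le _ _
      _ < d := max_lt (polyOf_natDegree_lt d hd a) (polyOf_natDegree_lt d hd a')
      _ ≤ Fintype.card F := hcard
  funext j
  have := congrArg (fun p => Polynomial.coeff p (j : ℕ)) hzero
  simp only [Polynomial.coeff_sub, Polynomial.coeff_zero, sub_eq_zero] at this
  rw [polyOf_coeff, polyOf_coeff] at this
  exact this

lemma pf_agree_card_lt (d : ℕ) (hd : 0 < d) {a a' : Fin d → F} (hne : a ≠ a') :
    (Finset.univ.filter (fun i => pf d a i = pf d a' i)).card < d := by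
  set p := polyOf d a - polyOf d a' with hp
  have hpne : p ≠ 0 := by
    intro h0
    apply hne
    funext j
    have := congrArg (fun q => Polynomial.coeff q (j : ℕ)) h0
    simp only [hp, Polynomial.coeff_sub, Polynomial.coeff_zero, sub_eq_zero] at this
    rw [polyOf_coeff, polyOf_coeff] at this
    exact this
  have hsub : Finset.univ.filter (fun i => pf d a i = pf d a' i) ⊆ p.roots.toFinset := by
    intro i hi
    rw [Finset.mem_filter] at hi
    rw [Multiset.mem_toFinset, Polynomial.mem_roots hpne]
    show p.eval i = 0
    rw [hp, Polynomial.eval_sub, polyOf_eval, polyOf_eval, hi.2, sub_self]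
  calc (Finset.univ.filter (fun i => pf d a i = pf d a' i)).card
      ≤ p.roots.toFinset.card := Finset.card_le_card hsub
    _ ≤ Multiset.card p.roots := Multiset.toFinset_card_le _
    _ ≤ p.natDegree := Polynomial.card_roots' p
    _ ≤ max (polyOf d a).natDegree (polyOf d a').natDegree := Polynomial.natDegree_sub_le _ _
    _ < d := max_lt (polyOf_natDegree_lt d hd a) (polyOf_natDegree_lt d hd a')

lemma exists_pf (d : ℕ) (R : Finset F) (hR : R.card < d) (b : F → F) :
    ∃ a : Fin d → F, ∀ i ∈ R, pf d a i = b i := by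
  classical
  set p := Lagrange.interpolate R id b with hp
  have hdeg : p.natDegree < d := by
    by_cases hp0 : p = 0
    · rw [hp0, Polynomial.natDegree_zero]; omega
    · have hdlt : (Lagrange.interpolate R id b).degree < (R.card : WithBot ℕ) := by
        have := Lagrange.degree_interpolate_lt (s := R) (v := id) (r := b) (Set.injOn_id _)
        exact_mod_cast this
      rw [← hp] at hdlt
      have := (Polynomial.natDegree_lt_iff_degree_lt hp0).2 hdlt
      omega
  refine ⟨fun j => p.coeff (j : ℕ), fun i hi => ?_⟩
  have heval : p.eval i = b i := by
    have h2 : Polynomial.eval (id i) (Lagrange.interpolate R id b) = b i :=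
      Lagrange.eval_interpolate_at_node (v := id) (s := R) b (Set.injOn_id _) hi
    exact h2
  rw [← heval, Polynomial.eval_eq_sum_range' hdeg i]
  exact Fin.sum_univ_eq_sum_range (fun j => p.coeff j * i ^ j) d

end NWfacts

/-- Let `n = 2^k`, `N = n²`, `d < n`, and `r, ℓ, m` positive with
`n - r > d`, `r < d - 1`, `n - d - r ≤ m ≤ N`, and suppose
`n^r · C(N-(n-d-r), m-(n-d-r)) ≤ C(N, m)`. Then
`Dim⟨∂^r NW_d⟩_{(ℓ,m)} ≥ (1/2) n^r C(N, m) C(ℓ-1, m-1)`. -/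
theorem stmt10 (k d r ℓ m : ℕ) (F : Type) [Field F] [Fintype F]
    (hcard : Fintype.card F = 2 ^ k) (hd1 : 1 ≤ d) (hdn : d + r < 2 ^ k)
    (hr : 0 < r) (hrd : r + 1 < d) (hℓ : 0 < ℓ) (hm : 0 < m)
    (hmΔ : 2 ^ k - d - r ≤ m) (hmN : m ≤ (2 ^ k) ^ 2)
    (hcond : (2 ^ k) ^ r *
        ((2 ^ k) ^ 2 - (2 ^ k - d - r)).choose (m - (2 ^ k - d - r)) ≤
      ((2 ^ k) ^ 2).choose m) :
    (2 ^ k) ^ r * ((2 ^ k) ^ 2).choose m * (ℓ - 1).choose (m - 1) ≤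
      2 * Module.finrank F (shiftedSpan r ℓ m (NW F d)) := by
  classical
  letI : LinearOrder (F × F) := LinearOrder.lift' (Fintype.equivFin (F × F)) (Equiv.injective _)
  have hn2 : Fintype.card F = 2 ^ k := hcard
  have hd0 : 0 < d := hd1
  have hrd' : r < d := by omega
  have hdcard : d ≤ Fintype.card F := by omega
  -- the set of rows to differentiate along
  obtain ⟨R, -, hRcard⟩ := Finset.exists_subset_card_eq
    (s := (Finset.univ : Finset F)) (n := r) (by rw [Finset.card_univ]; omega)
  have hcardB : Fintype.card (↥R → F) = (2 ^ k) ^ r := by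
    rw [Fintype.card_fun, Fintype.card_coe, hRcard, hn2]
  set Ab : (↥R → F) → Finset (Fin d → F) := fun b => Finset.univ.filter
      (fun a : Fin d → F => ∀ i : ↥R, pf d a (i : F) = b i) with hAb
  have hAbne : ∀ b : ↥R → F, (Ab b).Nonempty := by
    intro b
    set bext : F → F := fun x => if h : x ∈ R then b ⟨x, h⟩ else 0 with hbext
    obtain ⟨a, ha⟩ := exists_pf d R (by omega) bext
    refine ⟨a, Finset.mem_filter.2 ⟨Finset.mem_univ _, fun i => ?_⟩⟩
    have h2 := ha (i : F) i.2
    have h3 : bext (i : F) = b i := by simp [hbext, i.2]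
    rw [h2, h3]
  choose amax hamax_mem hamax_max using fun b : ↥R → F =>
    Finset.exists_max_image (Ab b) (fun a => toLex (mono (pf d a) - gamb R b)) (hAbne b)
  set fb : (↥R → F) → F → F := fun b => pf d (amax b) with hfb
  have hfbR : ∀ (b : ↥R → F) (i : ↥R), fb b (i : F) = b i := by
    intro b i
    exact (Finset.mem_filter.1 (hamax_mem b)).2 i
  set lead : (↥R → F) → ((F × F) →₀ ℕ) := fun b => mono (fb b) - gamb R b with hlead
  have hgle : ∀ b : ↥R → F, gamb R b ≤ mono (fb b) :=
    fun b => (gamb_le_mono_iff R b (fb b)).2 (hfbR b)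
  have hleadsupp : ∀ b : ↥R → F, (lead b).support
      = (Finset.univ \ R).image (fun i => (i, fb b i)) :=
    fun b => sub_gamb_support R b (fb b) (hfbR b)
  set Qb : (↥R → F) → MvPolynomial (F × F) F := fun b => derivMon (gamb R b) (NW F d) with hQb
  have hQb_eq : ∀ b : ↥R → F,
      Qb b = ∑ a ∈ Ab b, monomial (mono (pf d a) - gamb R b) (1 : F) := by
    intro b
    have hrw : ∀ a : Fin d → F, derivMon (gamb R b) (monomial (mono (pf d a)) (1:F))
        = if (∀ i : ↥R, pf d a (i : F) = b i)
          then monomial (mono (pf d a) - gamb R b) (1:F) else 0 := by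
      intro a
      rw [derivMon_sq_free _ _ (gamb_le_one R b) (mono_le_one _)]
      exact if_congr (gamb_le_mono_iff R b (pf d a)) rfl rfl
    calc Qb b = ∑ a : Fin d → F, derivMon (gamb R b) (monomial (mono (pf d a)) (1:F)) := by
          show derivMon (gamb R b) (NW F d) = _
          rw [NW_eq, derivMon_sum]
    _ = ∑ a : Fin d → F, if (∀ i : ↥R, pf d a (i : F) = b i)
          then monomial (mono (pf d a) - gamb R b) (1:F) else 0 :=
          Finset.sum_congr rfl (fun a _ => hrw a)
    _ = _ := (Finset.sum_filter _ _).symm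
  have hab_le : ∀ (b : ↥R → F) (a : Fin d → F), a ∈ Ab b → gamb R b ≤ mono (pf d a) := by
    intro b a ha
    exact (gamb_le_mono_iff R b (pf d a)).2 (Finset.mem_filter.1 ha).2
  have hab_inj : ∀ (b : ↥R → F) (a : Fin d → F), a ∈ Ab b →
      mono (pf d a) - gamb R b = lead b → a = amax b := by
    intro b a ha hc
    have h1 := hab_le b a ha
    have h2 := hgle b
    have h3 : mono (pf d a) = mono (fb b) := by
      have h4 := congrArg (· + gamb R b) hc
      simp only [hlead] at h4
      rwa [tsub_add_cancel_of_le h1, tsub_add_cancel_of_le h2] at h4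
    exact pf_inj d hd0 hdcard (mono_inj h3)
  have hcoeff_lead : ∀ b : ↥R → F, MvPolynomial.coeff (lead b) (Qb b) = 1 := by
    intro b
    rw [hQb_eq b, MvPolynomial.coeff_sum]
    rw [Finset.sum_eq_single_of_mem (amax b) (hamax_mem b) (fun a ha hne => ?_)]
    · rw [MvPolynomial.coeff_monomial, if_pos rfl]
    · rw [MvPolynomial.coeff_monomial, if_neg]
      intro hc
      exact hne (hab_inj b a ha hc)
  have hmax_supp : ∀ (b : ↥R → F) (w : (F × F) →₀ ℕ), MvPolynomial.coeff w (Qb b) ≠ 0 →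
      toLex w ≤ toLex (lead b) := by
    intro b w hw
    have hex : ∃ a ∈ Ab b, w = mono (pf d a) - gamb R b := by
      by_contra hno
      push_neg at hno
      apply hw
      rw [hQb_eq b, MvPolynomial.coeff_sum]
      apply Finset.sum_eq_zero
      intro a ha
      rw [MvPolynomial.coeff_monomial, if_neg (fun hc => hno a ha hc.symm)]
    obtain ⟨a, ha, rfl⟩ := hex
    exact hamax_max b a ha
  -- counting
  set E := Emons (σ := F × F) ℓ m with hE
  have hNcard : Fintype.card (F × F) = (2 ^ k) ^ 2 := by
    rw [Fintype.card_prod, hn2]; ring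
  have hcardE : E.card = ((2 ^ k) ^ 2).choose m * (ℓ - 1).choose (m - 1) := by
    rw [hE, card_Emons ℓ m hℓ hm, hNcard]
  set Tf : (↥R → F) → Finset ((F × F) →₀ ℕ) := fun b => E.image (· + lead b) with hTf
  have hcardTf : ∀ b, (Tf b).card = E.card := fun b =>
    Finset.card_image_of_injective _ (add_left_injective (lead b))
  set U := (Finset.univ : Finset (↥R → F)).biUnion Tf with hU
  -- rank bound
  haveI := finiteDimensional_shiftedSpan (K := F) r ℓ m (NW F d)
  have hUrank : U.card ≤ Module.finrank F (shiftedSpan r ℓ m (NW F d)) := by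
    apply card_le_finrank_of_lead _ U (toLex : ((F × F) →₀ ℕ) → Lex ((F × F) →₀ ℕ))
      toLex.injective
    intro w hw
    rw [hU, Finset.mem_biUnion] at hw
    obtain ⟨b, -, hwb⟩ := hw
    rw [hTf, Finset.mem_image] at hwb
    obtain ⟨e, heE, rfl⟩ := hwb
    have heprops := heE
    rw [hE, Emons, Finset.mem_filter, Finset.mem_finsuppAntidiag'] at heprops
    refine ⟨monomial e (1:F) * Qb b, ?_, ?_, ?_⟩
    · apply Submodule.subset_span
      refine ⟨e, gamb R b, heprops.1.1, heprops.2, by rw [monDeg_gamb, hRcard], rfl⟩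
    · rw [MvPolynomial.coeff_monomial_mul, hcoeff_lead b]
      norm_num
    · intro γ hγ
      rw [MvPolynomial.coeff_monomial_mul'] at hγ
      by_cases hle : e ≤ γ
      · rw [if_pos hle, one_mul] at hγ
        have hmax := hmax_supp b (γ - e) hγ
        calc toLex γ = toLex ((γ - e) + e) := by rw [tsub_add_cancel_of_le hle]
        _ = toLex (γ - e) + toLex e := rfl
        _ ≤ toLex (lead b) + toLex e := add_le_add_left hmax _
        _ = toLex (lead b + e) := rfl
        _ = toLex (e + lead b) := by rw [add_comm]
      · rw [if_neg hle] at hγ; exact absurd rfl hγ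
  -- collision bound
  have hcollision : ∀ b b' : ↥R → F, b ≠ b' →
      (Tf b ∩ Tf b').card ≤ ((2 ^ k) ^ 2 - (2 ^ k - d - r)).choose (m - (2 ^ k - d - r))
        * (ℓ - 1).choose (m - 1) := by
    intro b b' hbne
    have hamne : amax b ≠ amax b' := by
      intro hc
      apply hbne
      funext i
      rw [← hfbR b i, ← hfbR b' i, hfb]
      simp only [hc]
    have hagree := pf_agree_card_lt d hd0 hamne
    set Wd := (Finset.univ \ R).filter (fun i => fb b i ≠ fb b' i) with hWd
    have hWdcard : 2 ^ k - d - r ≤ Wd.card := by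
      have hsplit : Wd.card + ((Finset.univ \ R).filter (fun i => fb b i = fb b' i)).card
          = (Finset.univ \ R).card := by
        rw [hWd]
        rw [show ((Finset.univ \ R).filter (fun i => fb b i = fb b' i))
            = ((Finset.univ \ R).filter (fun a => ¬ (fun i => fb b i ≠ fb b' i) a)) from by
          apply Finset.filter_congr
          intro i _
          simp]
        exact Finset.card_filter_add_card_filter_not _
      have hcards : (Finset.univ \ R).card = 2 ^ k - r := by
        rw [Finset.card_sdiff_of_subset (Finset.subset_univ R), hRcard, Finset.card_univ, hn2]
      have hsubagree : (Finset.univ \ R).filter (fun i => fb b i = fb b' i) ⊆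
          Finset.univ.filter (fun i => pf d (amax b) i = pf d (amax b') i) := by
        intro i hi
        rw [Finset.mem_filter] at hi ⊢
        exact ⟨Finset.mem_univ _, hi.2⟩
      have hagree2 := Finset.card_le_card hsubagree
      omega
    have himgcard : (Wd.image (fun i => (i, fb b' i))).card = Wd.card :=
      Finset.card_image_of_injective _ (fun x y h => congrArg Prod.fst h)
    obtain ⟨S', hS'sub, hS'card⟩ := Finset.exists_subset_card_eq
      (s := Wd.image (fun i => (i, fb b' i))) (n := 2 ^ k - d - r) (by omega)
    have hsubset : Tf b ∩ Tf b' ⊆ (E.filter (fun e => S' ⊆ e.support)).image (· + lead b) := by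
      intro w hw
      rw [Finset.mem_inter] at hw
      obtain ⟨hw1, hw2⟩ := hw
      rw [hTf, Finset.mem_image] at hw1 hw2
      obtain ⟨e, heE, rfl⟩ := hw1
      obtain ⟨e', he'E, heq⟩ := hw2
      rw [Finset.mem_image]
      refine ⟨e, Finset.mem_filter.2 ⟨heE, ?_⟩, rfl⟩
      intro v hv
      have hvS : v ∈ Wd.image (fun i => (i, fb b' i)) := hS'sub hv
      rw [Finset.mem_image] at hvS
      obtain ⟨i, hiWd, rfl⟩ := hvS
      rw [hWd, Finset.mem_filter] at hiWd
      have hv1 : (lead b') (i, fb b' i) ≠ 0 := by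
        apply Finsupp.mem_support_iff.1
        rw [hleadsupp b', Finset.mem_image]
        exact ⟨i, hiWd.1, rfl⟩
      have hv0 : (lead b) (i, fb b' i) = 0 := by
        by_contra hc
        have hmem : (i, fb b' i) ∈ (lead b).support := Finsupp.mem_support_iff.2 hc
        rw [hleadsupp b, Finset.mem_image] at hmem
        obtain ⟨j, hj, hjeq⟩ := hmem
        have hji : j = i := congrArg Prod.fst hjeq
        have hsnd := congrArg Prod.snd hjeq
        rw [hji] at hsnd
        exact hiWd.2 hsnd
      have happ := congrArg (fun f : ((F × F) →₀ ℕ) => f (i, fb b' i)) heq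
      simp only [Finsupp.add_apply] at happ
      rw [Finsupp.mem_support_iff]
      intro h0
      rw [h0, hv0] at happ
      omega
    calc (Tf b ∩ Tf b').card
        ≤ ((E.filter (fun e => S' ⊆ e.support)).image (· + lead b)).card :=
        Finset.card_le_card hsubset
    _ ≤ (E.filter (fun e => S' ⊆ e.support)).card := Finset.card_image_le
    _ ≤ (Fintype.card (F × F) - S'.card).choose (m - S'.card) * (ℓ - 1).choose (m - 1) :=
        card_Emons_filter ℓ m hℓ hm S'
    _ = _ := by rw [hS'card, hNcard]
  -- Bonferroni
  letI : LinearOrder (↥R → F) := LinearOrder.lift' (Fintype.equivFin (↥R → F)) (Equiv.injective _)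
  have hbonf := sum_card_le_card_biUnion (Finset.univ : Finset (↥R → F)) Tf
  have hsum : ∑ b ∈ (Finset.univ : Finset (↥R → F)), (Tf b).card = (2 ^ k) ^ r * E.card := by
    rw [Finset.sum_congr rfl (fun b _ => hcardTf b), Finset.sum_const, Finset.card_univ,
      hcardB, smul_eq_mul]
  set P := (Finset.univ : Finset (↥R → F)).offDiag.filter (fun p => p.2 < p.1) with hP
  have hPcard : 2 * P.card ≤ (2 ^ k) ^ r * (2 ^ k) ^ r := by
    have hswap : (P.image Prod.swap).card = P.card :=
      Finset.card_image_of_injective _ Prod.swap_injective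
    have hdisj : Disjoint P (P.image Prod.swap) := by
      rw [Finset.disjoint_left]
      rintro ⟨p1, p2⟩ hp hq
      rw [hP, Finset.mem_filter] at hp
      rw [Finset.mem_image] at hq
      obtain ⟨⟨q1, q2⟩, hqP, hqeq⟩ := hq
      rw [hP, Finset.mem_filter] at hqP
      have h1 : q2 = p1 := congrArg Prod.fst hqeq
      have h2 : q1 = p2 := congrArg Prod.snd hqeq
      subst h1; subst h2
      exact absurd hqP.2 (lt_asymm hp.2)
    have hunion : P ∪ P.image Prod.swap ⊆ (Finset.univ : Finset (↥R → F)).offDiag := by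
      apply Finset.union_subset
      · exact (Finset.filter_subset _ _).trans (le_refl _)
      · intro p hp
        rw [Finset.mem_image] at hp
        obtain ⟨q, hq, rfl⟩ := hp
        rw [hP, Finset.mem_filter, Finset.mem_offDiag] at hq
        rw [Finset.mem_offDiag]
        exact ⟨Finset.mem_univ _, Finset.mem_univ _, Ne.symm hq.1.2.2⟩
    have hle := Finset.card_le_card hunion
    rw [Finset.card_union_of_disjoint hdisj, hswap, Finset.offDiag_card, Finset.card_univ,
      hcardB] at hle
    omega
  have hsump : ∑ p ∈ P, (Tf p.1 ∩ Tf p.2).card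
      ≤ P.card * (((2 ^ k) ^ 2 - (2 ^ k - d - r)).choose (m - (2 ^ k - d - r))
        * (ℓ - 1).choose (m - 1)) := by
    calc ∑ p ∈ P, (Tf p.1 ∩ Tf p.2).card
        ≤ ∑ _p ∈ P, (((2 ^ k) ^ 2 - (2 ^ k - d - r)).choose (m - (2 ^ k - d - r))
          * (ℓ - 1).choose (m - 1)) := by
          apply Finset.sum_le_sum
          intro p hp
          rw [hP, Finset.mem_filter, Finset.mem_offDiag] at hp
          exact hcollision p.1 p.2 hp.1.2.2
    _ = _ := by rw [Finset.sum_const, smul_eq_mul]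
  -- final arithmetic
  set X := ((2 ^ k) ^ 2 - (2 ^ k - d - r)).choose (m - (2 ^ k - d - r)) with hX
  set C2 := (ℓ - 1).choose (m - 1) with hC2
  set q := (2 ^ k) ^ r with hq
  have h2p : 2 * (∑ p ∈ P, (Tf p.1 ∩ Tf p.2).card) ≤ q * E.card := by
    calc 2 * (∑ p ∈ P, (Tf p.1 ∩ Tf p.2).card) ≤ 2 * (P.card * (X * C2)) :=
        Nat.mul_le_mul_left 2 hsump
    _ = (2 * P.card) * (X * C2) := by ring
    _ ≤ (q * q) * (X * C2) := Nat.mul_le_mul_right _ hPcard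
    _ = q * ((q * X) * C2) := by ring
    _ ≤ q * (((2 ^ k) ^ 2).choose m * C2) :=
        Nat.mul_le_mul_left q (Nat.mul_le_mul_right C2 hcond)
    _ = q * E.card := by rw [hcardE]
  have hfin : q * E.card ≤ U.card + ∑ p ∈ P, (Tf p.1 ∩ Tf p.2).card := by
    rw [← hsum]
    exact hbonf
  have hgoal : q * ((2 ^ k) ^ 2).choose m * C2 = q * E.card := by
    rw [hcardE]; ring
  rw [hgoal]
  omega
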